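/- arXiv:2603.23859 — 2 statements merged into one kernel-verified Lean document; each statement's English description precedes it below -/
import Mathlib

section
/- Consider a ULA of N antennas with positions x₁,…,x_N ∈ ℝ along its axis, array response entries a_n(f,θ) = exp(j·(2πf/c)·(r₁ᵀ v(θ))·x_n), where v(θ) = [cos θ cos φ₀, cos θ sin φ₀, sin θ]ᵀ and r₁ is the first column of the rotation matrix. If the rotation angles satisfy α = β = 0 and γ = φ₀ + π/2, then a_n(f,θ) = 1 for all n, all frequencies f, and all elevation angles θ; consequently, with ω = (1/√N)·[1,…,1]ᵀ, the beam gain G(f,θ) = |ωᴴ a(f,θ)|² equals N for all f and θ. -/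
open Real Complex Finset

/-- Theorem 1: with α = β = 0 and γ = φ₀ + π/2, the rotated ULA has a
frequency- and angle-independent array response, and the uniform beamformer
achieves the full array gain `N` at every frequency and elevation angle. -/
theorem ula_rotation_eliminates_beam_squint {N : ℕ} (hN : 1 ≤ N)
    (c : ℝ) (hc : 0 < c) (φ₀ : ℝ) (x : Fin N → ℝ) :
    ∀ α β γ : ℝ, α = 0 → β = 0 → γ = φ₀ + Real.pi / 2 →
    -- the effective phase projection r₁ᵀ v(θ)
    ∀ proj : ℝ → ℝ,
    (∀ θ, proj θ =
      (Real.cos β * Real.cos γ) * (Real.cos θ * Real.cos φ₀) +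
      (Real.sin α * Real.sin β * Real.cos γ + Real.cos α * Real.sin γ) *
        (Real.cos θ * Real.sin φ₀) +
      (Real.sin α * Real.sin γ - Real.cos α * Real.sin β * Real.cos γ) * Real.sin θ) →
    -- array response entries
    ∀ a : ℝ → ℝ → Fin N → ℂ,
    (∀ f θ n, a f θ n =
      Complex.exp (Complex.I * (((2 * Real.pi * f / c) * proj θ * x n : ℝ) : ℂ))) →
    (∀ f θ n, a f θ n = 1) ∧
    (∀ f θ,
      (‖∑ n, star ((1 / Real.sqrt N : ℝ) : ℂ) * a f θ n‖) ^ 2 = N) := by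
  intro α β γ hα hβ hγ proj hproj a ha
  have hproj0 : ∀ θ, proj θ = 0 := by
    intro θ
    rw [hproj, hα, hβ, hγ]
    simp [Real.cos_add, Real.sin_add]
    ring
  have h1 : ∀ f θ n, a f θ n = 1 := by
    intro f θ n
    rw [ha, hproj0]
    simp
  refine ⟨h1, fun f θ => ?_⟩
  have hNpos : (0:ℝ) < N := by exact_mod_cast Nat.lt_of_lt_of_le Nat.zero_lt_one hN
  have hsum : (∑ n : Fin N, star ((1 / Real.sqrt N : ℝ) : ℂ) * a f θ n)
      = ((N / Real.sqrt N : ℝ) : ℂ) := by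
    simp only [h1 f θ, mul_one, Finset.sum_const, Finset.card_univ, Fintype.card_fin,
      nsmul_eq_mul, Complex.star_def, Complex.conj_ofReal]
    push_cast
    ring
  rw [hsum, Complex.norm_real, Real.norm_eq_abs, _root_.sq_abs, div_pow, Real.sq_sqrt hNpos.le]
  have hs : Real.sqrt N ≠ 0 := by positivity
  field_simp
end

section
/- Let s₁, s₂ ∈ ℝ³ be two distinct columns of a rotation matrix R ∈ SO(3) (so s₁ᵀ s₂ = 0 and ‖s₁‖ = ‖s₂‖ = 1), and fix φ₀ ∈ ℝ and a nondegenerate interval [θ_min, θ_max]. With v(θ) = [cos θ cos φ₀, cos θ sin φ₀, sin θ]ᵀ, it is impossible that v(θ)ᵀ s₁ = 0 and v(θ)ᵀ s₂ = 0 simultaneously for all θ ∈ [θ_min, θ_max]. -/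
set_option maxHeartbeats 1000000


open Real Set Matrix

lemma squint_aux (θa θb : ℝ) (hsin : Real.sin (θb - θa) ≠ 0)
    (z A : ℝ)
    (ha : Real.cos θa * A + Real.sin θa * z = 0)
    (hb : Real.cos θb * A + Real.sin θb * z = 0) :
    A = 0 ∧ z = 0 := by
  have hdet : Real.sin (θb - θa) = Real.sin θb * Real.cos θa - Real.cos θb * Real.sin θa := by
    rw [Real.sin_sub]
  constructor
  · have hA : Real.sin (θb - θa) * A = 0 := by
      rw [hdet]; linear_combination Real.sin θb * ha - Real.sin θa * hb
    exact (mul_eq_zero.1 hA).resolve_left hsin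
  · have hz : Real.sin (θb - θa) * z = 0 := by
      rw [hdet]; linear_combination Real.cos θa * hb - Real.cos θb * ha
    exact (mul_eq_zero.1 hz).resolve_left hsin

/-- Appendix B: no rotation of a planar array can make both effective phase
projections vanish over a nondegenerate elevation interval. -/
theorem upa_cannot_eliminate_beam_squint
    (s₁ s₂ : Fin 3 → ℝ)
    (horth : s₁ ⬝ᵥ s₂ = 0) (hs₁ : s₁ ⬝ᵥ s₁ = 1) (hs₂ : s₂ ⬝ᵥ s₂ = 1)
    (φ₀ θmin θmax : ℝ) (hθ : θmin < θmax) :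
    ¬ (∀ θ ∈ Set.Icc θmin θmax,
        (![Real.cos θ * Real.cos φ₀, Real.cos θ * Real.sin φ₀, Real.sin θ] ⬝ᵥ s₁ = 0) ∧
        (![Real.cos θ * Real.cos φ₀, Real.cos θ * Real.sin φ₀, Real.sin θ] ⬝ᵥ s₂ = 0)) := by
  intro h
  set δ : ℝ := min (θmax - θmin) (Real.pi / 2) with hδdef
  have hδpos : 0 < δ := lt_min (by linarith) (by positivity)
  have hδlt : δ < Real.pi := lt_of_le_of_lt (min_le_right _ _) (by linarith [Real.pi_pos])
  have hsinδ : Real.sin δ ≠ 0 := ne_of_gt (Real.sin_pos_of_pos_of_lt_pi hδpos hδlt)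
  set θb : ℝ := θmin + δ with hθbdef
  have hmem_a : θmin ∈ Set.Icc θmin θmax := ⟨le_refl _, le_of_lt hθ⟩
  have hmem_b : θb ∈ Set.Icc θmin θmax :=
    ⟨by linarith, by have := min_le_left (θmax - θmin) (Real.pi / 2); simp [hθbdef]; linarith⟩
  have ha := h θmin hmem_a
  have hb := h θb hmem_b
  have hsin' : Real.sin (θb - θmin) ≠ 0 := by simpa [hθbdef] using hsinδ
  simp only [dotProduct, Fin.sum_univ_three, Matrix.cons_val_zero,
    Matrix.cons_val_one, Matrix.head_cons, Matrix.cons_val_two, Matrix.tail_cons]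
    at ha hb horth hs₁ hs₂
  obtain ⟨ha1, ha2⟩ := ha
  obtain ⟨hb1, hb2⟩ := hb
  obtain ⟨hA1, hz1⟩ := squint_aux θmin θb hsin' (s₁ 2)
    (Real.cos φ₀ * s₁ 0 + Real.sin φ₀ * s₁ 1)
    (by linear_combination ha1) (by linear_combination hb1)
  obtain ⟨hA2, hz2⟩ := squint_aux θmin θb hsin' (s₂ 2)
    (Real.cos φ₀ * s₂ 0 + Real.sin φ₀ * s₂ 1)
    (by linear_combination ha2) (by linear_combination hb2)
  have hcs : Real.cos φ₀ ^ 2 + Real.sin φ₀ ^ 2 = 1 := by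
    rw [add_comm]; exact Real.sin_sq_add_cos_sq φ₀
  have hcr1 : Real.sin φ₀ * (s₁ 0 * s₂ 1 - s₁ 1 * s₂ 0) = 0 := by
    linear_combination s₁ 0 * hA2 - s₂ 0 * hA1
  have hcr2 : Real.cos φ₀ * (s₁ 0 * s₂ 1 - s₁ 1 * s₂ 0) = 0 := by
    linear_combination s₂ 1 * hA1 - s₁ 1 * hA2
  have hcross : s₁ 0 * s₂ 1 - s₁ 1 * s₂ 0 = 0 := by
    linear_combination Real.sin φ₀ * hcr1 + Real.cos φ₀ * hcr2
      - (s₁ 0 * s₂ 1 - s₁ 1 * s₂ 0) * hcs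
  have p1 : s₁ 0 ^ 2 + s₁ 1 ^ 2 = 1 := by nlinarith [hs₁, hz1]
  have p2 : s₂ 0 ^ 2 + s₂ 1 ^ 2 = 1 := by nlinarith [hs₂, hz2]
  have pP : s₁ 0 * s₂ 0 + s₁ 1 * s₂ 1 = 0 := by
    rw [hz1] at horth; linarith [horth]
  have key : (s₁ 0 ^ 2 + s₁ 1 ^ 2) * (s₂ 0 ^ 2 + s₂ 1 ^ 2)
      = (s₁ 0 * s₂ 0 + s₁ 1 * s₂ 1) ^ 2 + (s₁ 0 * s₂ 1 - s₁ 1 * s₂ 0) ^ 2 := by ring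
  rw [p1, p2, pP, hcross] at key
  norm_num at key
end
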